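/- Let f be a lifetime distribution and f̂(θ) = ∑_{n≥1} f(n)·e^{inθ}. Suppose 0 < θ < π/2, let K = ⌊2/(πθ)⌋, and suppose η ∈ (0,1) satisfies c(K+1) ≤ ((1−η)/√5)·(2/π)·θ·M(K). Then |1 − f̂(θ)| ≥ (2η/π)·θ·M(K). -/

import Mathlib

open Finset

/-- `rnwC f N = ∑_{n ≥ N} f n`, the tail of the lifetime distribution. -/
noncomputable def rnwC (f : ℕ → ℝ) (N : ℕ) : ℝ := ∑' k : ℕ, f (N + k)

/-- The characteristic function `f̂(θ) = ∑_{n ≥ 1} f(n) e^{inθ}` of the lifetime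
distribution (the `n = 0` term vanishes since `f 0 = 0`). -/
noncomputable def fhat (f : ℕ → ℝ) (θ : ℝ) : ℂ :=
  ∑' n : ℕ, (f n : ℂ) * Complex.exp (Complex.I * n * θ)

/-- For a lifetime distribution `f`, `0 < θ < π/2`, `K = ⌊2/(πθ)⌋` and
`η ∈ (0,1)` with `c(K+1) ≤ ((1−η)/√5)·(2/π)·θ·M(K)`, one has
`|1 − f̂(θ)| ≥ (2η/π)·θ·M(K)`. -/
theorem stmt7 (f : ℕ → ℝ)
    (hf0 : f 0 = 0) (hfpos : ∀ n, 0 ≤ f n) (hfsum : HasSum f 1)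
    (θ η : ℝ) (hθ0 : 0 < θ) (hθ : θ < Real.pi / 2) (hη0 : 0 < η) (hη1 : η < 1)
    (hc : rnwC f (⌊2 / (Real.pi * θ)⌋₊ + 1) ≤
      ((1 - η) / Real.sqrt 5) * ((2 / Real.pi) * θ *
        ∑ n ∈ Finset.Icc 1 ⌊2 / (Real.pi * θ)⌋₊, (n : ℝ) * f n)) :
    (2 * η / Real.pi) * θ * ∑ n ∈ Finset.Icc 1 ⌊2 / (Real.pi * θ)⌋₊, (n : ℝ) * f n ≤
      ‖1 - fhat f θ‖ := by
  have hπ : (0:ℝ) < Real.pi := Real.pi_pos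
  set K := ⌊2 / (Real.pi * θ)⌋₊ with hK
  set M := ∑ n ∈ Finset.Icc 1 K, (n : ℝ) * f n with hMdef
  have hsf : Summable f := hfsum.summable
  -- s n = f n * sin (n θ)
  set s : ℕ → ℝ := fun n => f n * Real.sin (n * θ) with hs_def
  have hs : Summable s := by
    apply Summable.of_norm_bounded hsf
    intro n
    rw [Real.norm_eq_abs, abs_mul, abs_of_nonneg (hfpos n)]
    have habs : |Real.sin ((n:ℝ) * θ)| ≤ 1 :=
      abs_le.2 ⟨Real.neg_one_le_sin _, Real.sin_le_one _⟩
    calc f n * |Real.sin ((n:ℝ) * θ)| ≤ f n * 1 :=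
          mul_le_mul_of_nonneg_left habs (hfpos n)
      _ = f n := mul_one _
  -- summability of the complex series
  have hg : Summable (fun n : ℕ => (f n : ℂ) * Complex.exp (Complex.I * n * θ)) := by
    apply Summable.of_norm_bounded hsf
    intro n
    rw [norm_mul, Complex.norm_real, Real.norm_eq_abs,
      abs_of_nonneg (hfpos n), Complex.norm_exp]
    have : (Complex.I * n * θ).re = 0 := by simp
    rw [this, Real.exp_zero, mul_one]
  -- imaginary part of fhat
  have him : (fhat f θ).im = ∑' n, s n := by
    rw [fhat, Complex.im_tsum hg]
    congr 1; funext n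
    have : Complex.I * (n:ℂ) * (θ:ℂ) = ((n * θ : ℝ) : ℂ) * Complex.I := by
      push_cast; ring
    rw [this]
    simp only [hs_def, Complex.mul_im, Complex.ofReal_re, Complex.ofReal_im,
      Complex.exp_ofReal_mul_I_im]
    ring
  -- split the tsum
  have hstail : Summable (fun k => s (k + (K+1))) := (summable_nat_add_iff (K+1)).2 hs
  have hsplit : (∑ i ∈ Finset.range (K+1), s i) + ∑' k, s (k + (K+1)) = ∑' n, s n :=
    Summable.sum_add_tsum_nat_add' hstail
  -- finite part equals sum over Icc 1 K
  have hfin : ∑ i ∈ Finset.range (K+1), s i = ∑ n ∈ Finset.Icc 1 K, s n := by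
    symm
    apply Finset.sum_subset
    · intro x hx
      simp only [Finset.mem_Icc] at hx
      exact Finset.mem_range.2 (Nat.lt_succ_of_le hx.2)
    · intro x hx hx'
      simp only [Finset.mem_Icc, not_and, not_le] at hx'
      have hxr := Finset.mem_range.1 hx
      have hx0 : x = 0 := by omega
      simp [hx0, hs_def, hf0]
  -- Jordan's inequality bound on the finite part
  have hKθ : (K : ℝ) * θ ≤ 2 / Real.pi := by
    have h1 : (K : ℝ) ≤ 2 / (Real.pi * θ) := Nat.floor_le (by positivity)
    have h2 : (K : ℝ) * θ ≤ (2 / (Real.pi * θ)) * θ :=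
      mul_le_mul_of_nonneg_right h1 hθ0.le
    calc (K:ℝ) * θ ≤ (2 / (Real.pi * θ)) * θ := h2
      _ = 2 / Real.pi := by field_simp
  have h2π : 2 / Real.pi ≤ Real.pi / 2 := by
    rw [div_le_div_iff₀ hπ two_pos]
    nlinarith [Real.pi_gt_three]
  have hA : 2 / Real.pi * θ * M ≤ ∑ n ∈ Finset.Icc 1 K, s n := by
    rw [hMdef, Finset.mul_sum]
    apply Finset.sum_le_sum
    intro n hn
    simp only [Finset.mem_Icc] at hn
    have hnθ0 : 0 ≤ (n:ℝ) * θ := by positivity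
    have hnθ : (n:ℝ) * θ ≤ Real.pi / 2 := by
      have : (n:ℝ) ≤ K := Nat.cast_le.2 hn.2
      nlinarith
    have := Real.mul_le_sin hnθ0 hnθ
    have hfn := hfpos n
    calc 2 / Real.pi * θ * ((n:ℝ) * f n) = f n * (2 / Real.pi * ((n:ℝ) * θ)) := by ring
      _ ≤ f n * Real.sin ((n:ℝ) * θ) := mul_le_mul_of_nonneg_left this hfn
      _ = s n := rfl
  -- tail bound
  have hshift : Summable (fun k => f (k + (K+1))) := (summable_nat_add_iff (K+1)).2 hsf
  have hc' : rnwC f (K+1) = ∑' k, f (k + (K+1)) := by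
    unfold rnwC
    congr 1; funext k; rw [Nat.add_comm]
  have htail : -(rnwC f (K+1)) ≤ ∑' k, s (k + (K+1)) := by
    rw [hc', ← tsum_neg]
    apply Summable.tsum_le_tsum _ hshift.neg hstail
    intro k
    have h1 : -1 ≤ Real.sin ((↑(k + (K+1)) : ℝ) * θ) := Real.neg_one_le_sin _
    have h2 := hfpos (k + (K+1))
    simp only [hs_def]
    nlinarith
  -- combine
  have hIm : 2 / Real.pi * θ * M - rnwC f (K+1) ≤ (fhat f θ).im := by
    rw [him, ← hsplit, hfin]
    linarith
  have habs : (fhat f θ).im ≤ ‖1 - fhat f θ‖ := by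
    have h1 : |(1 - fhat f θ).im| ≤ ‖1 - fhat f θ‖ := Complex.abs_im_le_norm _
    have h2 : (1 - fhat f θ).im = -(fhat f θ).im := by simp
    calc (fhat f θ).im ≤ |(fhat f θ).im| := le_abs_self _
      _ = |(1 - fhat f θ).im| := by rw [h2, abs_neg]
      _ ≤ _ := h1
  -- final arithmetic
  have hM0 : 0 ≤ M := Finset.sum_nonneg fun n _ => mul_nonneg (Nat.cast_nonneg n) (hfpos n)
  have hA0 : 0 ≤ 2 / Real.pi * θ * M := by positivity
  have h5 : 1 ≤ Real.sqrt 5 := by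
    rw [show (1:ℝ) = Real.sqrt 1 by simp]
    exact Real.sqrt_le_sqrt (by norm_num)
  have hcc : rnwC f (K+1) ≤ (1 - η) * (2 / Real.pi * θ * M) := by
    have h1 : (1 - η) / Real.sqrt 5 ≤ 1 - η := by
      apply div_le_self (by linarith) h5
    calc rnwC f (K+1) ≤ ((1 - η) / Real.sqrt 5) * ((2 / Real.pi) * θ * M) := hc
      _ ≤ (1 - η) * (2 / Real.pi * θ * M) := mul_le_mul_of_nonneg_right h1 hA0
  have : 2 * η / Real.pi * θ * M = η * (2 / Real.pi * θ * M) := by ring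
  rw [this]
  have : η * (2 / Real.pi * θ * M) ≤ 2 / Real.pi * θ * M - rnwC f (K+1) := by
    nlinarith
  linarith
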